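/- Let G be a group, P = L⋉U a subgroup with Levi L and normal subgroup U, and V a smooth admissible representation of P over a complete Noetherian local ring A. Suppose there exists an element z in the center of L and a compact open subgroup K_P = K_L·K_U of P fixing a given vector v such that z⁻ⁿK_P zⁿ ⊆ z⁻ᵐK_P zᵐ for n ≥ m and ⋃_{n≥0} zⁿ K_P z⁻ⁿ = K_L·U. Then U acts trivially on V. -/

import Mathlib

open IsLocalRing Pointwise

/-- A f.g. module over a local ring with finite residue field, killed by the maximal ideal,
is finite. -/
lemma finite_of_fg_of_maximalIdeal_smul {A : Type*} [CommRing A] [IsLocalRing A]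
    [Finite (ResidueField A)] (M : Type*) [AddCommGroup M] [Module A M] [Module.Finite A M]
    (h : ∀ m : M, ∀ a ∈ maximalIdeal A, a • m = 0) : Finite M := by
  have ht : Module.IsTorsionBySet A M (maximalIdeal A) := fun m a => h m a.1 a.2
  letI : Module (A ⧸ maximalIdeal A) M := ht.module
  haveI : IsScalarTower A (A ⧸ maximalIdeal A) M := ht.isScalarTower
  haveI : Module.Finite (A ⧸ maximalIdeal A) M :=
    Module.Finite.of_restrictScalars_finite A _ _
  haveI : Finite (A ⧸ maximalIdeal A) := ‹Finite (ResidueField A)›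
  exact Module.finite_of_finite (A ⧸ maximalIdeal A)

lemma finite_of_finite_submodule_quot {A M : Type*} [CommRing A] [AddCommGroup M] [Module A M]
    (N : Submodule A M) (h1 : Finite N) (h2 : Finite (M ⧸ N)) : Finite M := by
  haveI : Finite N.toAddSubgroup := h1
  haveI : Finite (M ⧸ N.toAddSubgroup) := h2
  exact (AddSubgroup.finite_iff_finite_and_finiteIndex (H := N.toAddSubgroup)).mpr
    ⟨inferInstance, AddSubgroup.finiteIndex_of_finite_quotient⟩

/-- A f.g. module over a Noetherian local ring with finite residue field, killed by a power
of the maximal ideal, is finite. -/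
lemma finite_of_fg_of_pow_maximalIdeal_smul {A : Type*} [CommRing A] [IsNoetherianRing A]
    [IsLocalRing A] [Finite (ResidueField A)] :
    ∀ (i : ℕ) (M : Type*) [AddCommGroup M] [Module A M] [Module.Finite A M],
      (∀ m : M, ∀ a ∈ (maximalIdeal A) ^ i, a • m = 0) → Finite M := by
  intro i
  induction i with
  | zero =>
    intro M _ _ _ h
    have hs : ∀ m : M, m = 0 := fun m => by
      simpa using h m 1 (by simp [Ideal.one_eq_top])
    haveI : Subsingleton M := ⟨fun a b => by rw [hs a, hs b]⟩
    exact Finite.of_subsingleton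
  | succ i ih =>
    intro M _ _ _ h
    set N : Submodule A M := (maximalIdeal A) • ⊤ with hNdef
    haveI : Module.Finite A N := Module.Finite.iff_fg.mpr (IsNoetherian.noetherian N)
    have h1 : Finite N := by
      refine ih N ?_
      rintro ⟨m, hm⟩ a ha
      refine Subtype.ext ?_
      show a • m = 0
      refine Submodule.smul_induction_on hm (fun r hr x _ => ?_) (fun x y hx hy => ?_)
      · rw [smul_smul]
        exact h x (a * r) (by rw [pow_succ]; exact Ideal.mul_mem_mul ha hr)
      · rw [smul_add, hx, hy, add_zero]
    have h2 : Finite (M ⧸ N) := by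
      refine finite_of_fg_of_maximalIdeal_smul (A := A) (M ⧸ N) (fun m a ha => ?_)
      obtain ⟨m, rfl⟩ := Submodule.Quotient.mk_surjective N m
      rw [← Submodule.Quotient.mk_smul, Submodule.Quotient.mk_eq_zero]
      exact Submodule.smul_mem_smul ha Submodule.mem_top
    exact finite_of_finite_submodule_quot N h1 h2

/-- If `V` is a smooth admissible representation of a subgroup `P = L ⋉ U` of a topological
group `G` over a complete Noetherian local ring `A`, and for every vector there is a central
element `z` of `L` and a compact open subgroup `K_P = K_L · K_U` fixing it, whose
`z`-conjugates form a decreasing chain with union `K_L · U`, then the unipotent radical `U`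
acts trivially on `V`. -/
theorem stmt_0
    {G : Type*} [Group G] [TopologicalSpace G] [IsTopologicalGroup G]
    (A : Type*) [CommRing A] [IsNoetherianRing A] [IsLocalRing A]
    [Finite (ResidueField A)]
    (V : Type*) [AddCommGroup V] [Module A V]
    (P L U : Subgroup G) (hLP : L ≤ P) (hUP : U ≤ P)
    (hsemidirect : ∀ p ∈ P, ∃ l ∈ L, ∃ u ∈ U, p = l * u)
    (hnormal : ∀ p ∈ P, ∀ u ∈ U, p * u * p⁻¹ ∈ U)
    (ρ : Representation A G V)
    -- `V` is a smooth representation of `P` :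
    (hsmooth : ∀ v : V, ∃ (K : Subgroup G) (i : ℕ), K ≤ P ∧ IsOpen (K : Set G) ∧
      (∀ k ∈ K, ρ k v = v) ∧ ∀ a ∈ (maximalIdeal A) ^ i, a • v = 0)
    -- `V` is admissible : for every compact open `H ≤ P` and every `i`, the module
    -- `V^H[𝔪^i]` is a finitely generated `A`-module
    (hadm : ∀ H : Subgroup G, H ≤ P → IsOpen (H : Set G) → IsCompact (H : Set G) →
      ∀ i : ℕ, ∃ S : Finset V, ∀ v : V,
        ((∀ h ∈ H, ρ h v = v) ∧ ∀ a ∈ (maximalIdeal A) ^ i, a • v = 0) →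
          v ∈ Submodule.span A (S : Set V))
    -- the central element of `L` and the filtration of compact open subgroups :
    (hz : ∀ v : V, ∃ z : G, z ∈ L ∧ (∀ l ∈ L, z * l = l * z) ∧
      ∃ K_P K_L K_U : Subgroup G, K_P ≤ P ∧ K_L ≤ L ∧ K_U ≤ U ∧
        IsOpen (K_P : Set G) ∧ IsCompact (K_P : Set G) ∧
        (K_P : Set G) = (K_L : Set G) * (K_U : Set G) ∧
        (∀ k ∈ K_P, ρ k v = v) ∧
        (∀ n m : ℕ, m ≤ n →
          (fun g => z⁻¹ ^ n * g * z ^ n) '' (K_P : Set G) ⊆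
            (fun g => z⁻¹ ^ m * g * z ^ m) '' (K_P : Set G)) ∧
        (⋃ n : ℕ, (fun g => z ^ n * g * z⁻¹ ^ n) '' (K_P : Set G)) =
          (K_L : Set G) * (U : Set G)) :
    ∀ u ∈ U, ∀ v : V, ρ u v = v := by
  intro u hu v
  obtain ⟨K, i, -, -, -, hkill⟩ := hsmooth v
  obtain ⟨z, hzL, hzcomm, K_P, K_L, K_U, hKP, hKL, hKU, hopen, hcpt, hprod, hfix, hchain,
    hunion⟩ := hz v
  -- basic computation rules
  have hρmul : ∀ (g h : G) (w : V), ρ (g * h) w = ρ g (ρ h w) := fun g h w => by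
    rw [map_mul]; rfl
  have hz1 : ∀ n : ℕ, z ^ n * z⁻¹ ^ n = 1 := fun n => by
    rw [inv_pow, mul_inv_cancel]
  have hz2 : ∀ n : ℕ, z⁻¹ ^ n * z ^ n = 1 := fun n => by
    rw [inv_pow, inv_mul_cancel]
  have hcancel1 : ∀ (n : ℕ) (w : V), ρ (z ^ n) (ρ (z⁻¹ ^ n) w) = w := fun n w => by
    rw [← hρmul, hz1, map_one]; rfl
  have hcancel2 : ∀ (n : ℕ) (w : V), ρ (z⁻¹ ^ n) (ρ (z ^ n) w) = w := fun n w => by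
    rw [← hρmul, hz2, map_one]; rfl
  -- the filtration of fixed vectors
  set W : ℕ → Set V := fun n =>
    {w | (∀ k ∈ K_P, ρ (z⁻¹ ^ n * k * z ^ n) w = w) ∧
      ∀ a ∈ (maximalIdeal A) ^ i, a • w = 0} with hWdef
  have hvW0 : v ∈ W 0 := ⟨fun k hk => by simpa using hfix k hk, hkill⟩
  have hW0n : ∀ n, W 0 ⊆ W n := by
    intro n w hw
    refine ⟨fun k hk => ?_, hw.2⟩
    obtain ⟨k', hk', heq⟩ := hchain n 0 (Nat.zero_le n) ⟨k, hk, rfl⟩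
    simp only [] at heq
    rw [← heq]
    exact hw.1 k' hk'
  have hback : ∀ n, ∀ w ∈ W n, ρ (z ^ n) w ∈ W 0 := by
    intro n w hw
    constructor
    · intro k hk
      have h1 : z⁻¹ ^ 0 * k * z ^ 0 = k := by simp
      rw [h1, ← hρmul]
      have h2 : k * z ^ n = z ^ n * (z⁻¹ ^ n * k * z ^ n) := by
        rw [← mul_assoc, ← mul_assoc, hz1, one_mul]
      rw [h2, hρmul, hw.1 k hk]
    · intro a ha
      rw [← map_smul, hw.2 a ha, map_zero]
  have hforward : ∀ n, ∀ w ∈ W 0, ρ (z⁻¹ ^ n) w ∈ W n := by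
    intro n w hw
    constructor
    · intro k hk
      rw [← hρmul]
      have h2 : z⁻¹ ^ n * k * z ^ n * z⁻¹ ^ n = z⁻¹ ^ n * k := by
        rw [mul_assoc, hz1, mul_one]
      rw [h2, hρmul]
      have h3 : ρ k w = w := by simpa using hw.1 k hk
      rw [h3]
    · intro a ha
      rw [← map_smul, hw.2 a ha, map_zero]
  -- finiteness of `W 0`
  obtain ⟨S, hS⟩ := hadm K_P hKP hopen hcpt i
  set Wsub : Submodule A V :=
    { carrier := {w | (∀ k ∈ K_P, ρ k w = w) ∧ ∀ a ∈ (maximalIdeal A) ^ i, a • w = 0}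
      add_mem' := by
        rintro x y ⟨hx1, hx2⟩ ⟨hy1, hy2⟩
        exact ⟨fun k hk => by rw [map_add, hx1 k hk, hy1 k hk],
          fun a ha => by rw [smul_add, hx2 a ha, hy2 a ha, add_zero]⟩
      zero_mem' := ⟨fun k hk => map_zero _, fun a ha => smul_zero a⟩
      smul_mem' := by
        rintro c x ⟨hx1, hx2⟩
        exact ⟨fun k hk => by rw [map_smul, hx1 k hk],
          fun a ha => by rw [smul_comm, hx2 a ha, smul_zero]⟩ } with hWsubdef
  have hWle : Wsub ≤ Submodule.span A (S : Set V) := fun w hw => hS w ⟨hw.1, hw.2⟩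
  haveI : IsNoetherian A (Submodule.span A (S : Set V)) :=
    isNoetherian_of_fg_of_noetherian _ (Submodule.fg_span (Finset.finite_toSet S))
  have hfg : Wsub.FG := by
    have heq : Wsub = Submodule.map (Submodule.span A (S : Set V)).subtype
        (Submodule.comap (Submodule.span A (S : Set V)).subtype Wsub) := by
      rw [Submodule.map_comap_subtype]
      exact (inf_eq_right.mpr hWle).symm
    rw [heq]
    exact (IsNoetherian.noetherian _).map _
  haveI : Module.Finite A Wsub := Module.Finite.iff_fg.mpr hfg
  haveI : Finite Wsub := finite_of_fg_of_pow_maximalIdeal_smul i Wsub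
    (fun m a ha => by
      apply Subtype.ext
      rw [Submodule.coe_smul, ZeroMemClass.coe_zero]
      exact m.2.2 a ha)
  have hW0sub : W 0 ⊆ (Wsub : Set V) := by
    rintro w ⟨h1, h2⟩
    exact ⟨fun k hk => by simpa using h1 k hk, h2⟩
  have hfin0 : (W 0).Finite := Set.Finite.subset (Wsub : Set V).toFinite hW0sub
  -- equality of the filtration steps
  have hWeq : ∀ n, W n = W 0 := by
    intro n
    have himg : W n ⊆ (fun w => ρ (z⁻¹ ^ n) w) '' (W 0) := fun w hw =>
      ⟨ρ (z ^ n) w, hback n w hw, hcancel2 n w⟩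
    refine (Set.eq_of_subset_of_ncard_le (hW0n n) ?_ ?_).symm
    · calc (W n).ncard ≤ ((fun w => ρ (z⁻¹ ^ n) w) '' (W 0)).ncard :=
            Set.ncard_le_ncard himg (hfin0.image _)
        _ ≤ (W 0).ncard := Set.ncard_image_le hfin0
    · exact (hfin0.image _).subset himg
  -- conclusion
  have huKU : u ∈ (K_L : Set G) * (U : Set G) := ⟨1, K_L.one_mem, u, hu, one_mul u⟩
  rw [← hunion] at huKU
  simp only [Set.mem_iUnion, Set.mem_image, SetLike.mem_coe] at huKU
  obtain ⟨n, k, hk, heq⟩ := huKU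
  have hmem : ρ (z⁻¹ ^ n) v ∈ W 0 := (hWeq n) ▸ hforward n v hvW0
  have hfixk : ρ k (ρ (z⁻¹ ^ n) v) = ρ (z⁻¹ ^ n) v := by simpa using hmem.1 k hk
  have e1 : ρ (z ^ n * k * z⁻¹ ^ n) v = ρ (z ^ n) (ρ k (ρ (z⁻¹ ^ n) v)) := by
    rw [hρmul, hρmul]
  rw [← heq, e1, hfixk, hcancel1]
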